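/- Let B(G_1, …, G_n) be the bouquet of pairwise disjoint connected graphs G_1, …, G_n with respect to vertices x_i ∈ V(G_i), obtained by identifying all the vertices x_1, …, x_n into a single vertex x. Then Mo(B(G_1, …, G_n)) ≤ Σ_{i=1}^{n} Mo(G_i) + Σ_{i=1}^{n} |E(G_i)|·(|V(G)| − |V(G_i)|), where G = B(G_1, …, G_n). -/

import Mathlib

open Finset

section MostarDefs

variable {V : Type*}

/-- Number of vertices of `G` strictly closer to `u` than to `v`. -/
noncomputable def closerCount (G : SimpleGraph V) (u v : V) : ℕ :=
  Nat.card {w : V // G.dist w u < G.dist w v}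

/-- Contribution `|n_u - n_v|` of an edge, as a symmetric function on `Sym2 V`. -/
noncomputable def mostarTerm (G : SimpleGraph V) : Sym2 V → ℕ :=
  Sym2.lift ⟨fun u v => ((closerCount G u v : ℤ) - closerCount G v u).natAbs,
    fun u v => by dsimp only; omega⟩

/-- The Mostar index of a finite graph. -/
noncomputable def mostar (G : SimpleGraph V) [Finite V] : ℕ :=
  letI := Fintype.ofFinite V
  letI := Classical.decEq V
  letI := Classical.decRel G.Adj
  ∑ e ∈ G.edgeFinset, mostarTerm G e

/-- Distance from a vertex `w` to an edge, as min over the endpoints. -/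
noncomputable def vertexEdgeDist (G : SimpleGraph V) (w : V) : Sym2 V → ℕ :=
  Sym2.lift ⟨fun x y => min (G.dist x w) (G.dist y w), fun _ _ => min_comm _ _⟩

/-- Number of edges of `G` strictly closer to `u` than to `v`. -/
noncomputable def edgeCloserCount (G : SimpleGraph V) (u v : V) : ℕ :=
  Nat.card {e : Sym2 V // e ∈ G.edgeSet ∧ vertexEdgeDist G u e < vertexEdgeDist G v e}

/-- Contribution `|m_u - m_v|` of an edge, as a symmetric function on `Sym2 V`. -/
noncomputable def emostarTerm (G : SimpleGraph V) : Sym2 V → ℕ :=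
  Sym2.lift ⟨fun u v => ((edgeCloserCount G u v : ℤ) - edgeCloserCount G v u).natAbs,
    fun u v => by dsimp only; omega⟩

/-- The edge Mostar index of a finite graph. -/
noncomputable def emostar (G : SimpleGraph V) [Finite V] : ℕ :=
  letI := Fintype.ofFinite V
  letI := Classical.decEq V
  letI := Classical.decRel G.Adj
  ∑ e ∈ G.edgeFinset, emostarTerm G e

end MostarDefs


instance {α : Type*} [Finite α] : Finite (Option α) :=
  Finite.of_equiv _ (Equiv.optionEquivSumPUnit.{0} α).symm

/-- The bouquet `B(G 0, …, G (n-1))` of the graphs `G i` with respect to the vertices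
`x i`, obtained by identifying all the vertices `x i` into a single vertex (`none`). -/
def bouquetGraph (n : ℕ) (V : ℕ → Type*) (G : ∀ i, SimpleGraph (V i)) (x : ∀ i, V i) :
    SimpleGraph (Option ((i : Fin n) × {v : V i.val // v ≠ x i.val})) where
  Adj p q :=
    (∃ (i : Fin n) (a b : {v : V i.val // v ≠ x i.val}),
      (G i.val).Adj a.1 b.1 ∧ p = some ⟨i, a⟩ ∧ q = some ⟨i, b⟩) ∨
    (∃ (i : Fin n) (b : {v : V i.val // v ≠ x i.val}), (G i.val).Adj (x i.val) b.1 ∧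
      ((p = none ∧ q = some ⟨i, b⟩) ∨ (p = some ⟨i, b⟩ ∧ q = none)))
  symm := by
    refine ⟨?_⟩
    rintro p q (⟨i, a, b, h, rfl, rfl⟩ | ⟨i, b, h, (⟨rfl, rfl⟩ | ⟨rfl, rfl⟩)⟩)
    · exact Or.inl ⟨i, b, a, h.symm, rfl, rfl⟩
    · exact Or.inr ⟨i, b, h, Or.inr ⟨rfl, rfl⟩⟩
    · exact Or.inr ⟨i, b, h, Or.inl ⟨rfl, rfl⟩⟩
  loopless := by
    refine ⟨?_⟩
    rintro p (⟨i, a, b, h, rfl, hab⟩ | ⟨i, b, h, (⟨rfl, hab⟩ | ⟨rfl, hab⟩)⟩)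
    · obtain rfl : a = b := by simpa using hab
      exact (G i.val).irrefl h
    · cases hab
    · cases hab

namespace BouquetAux

variable {n : ℕ} {V : ℕ → Type*}

open Classical in
noncomputable def phi (x : ∀ i, V i) (i : Fin n) (v : V i.val) :
    Option ((j : Fin n) × {v : V j.val // v ≠ x j.val}) :=
  if h : v = x i.val then none else some ⟨i, ⟨v, h⟩⟩

open Classical in
noncomputable def proj (x : ∀ i, V i) (i : Fin n) :
    Option ((j : Fin n) × {v : V j.val // v ≠ x j.val}) → V i.val
  | none => x i.val
  | some ⟨j, w⟩ => if h : j = i then h ▸ w.1 else x i.val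

lemma phi_x (x : ∀ i, V i) (i : Fin n) : phi x i (x i.val) = none := by unfold phi; exact dif_pos rfl

lemma phi_ne (x : ∀ i, V i) (i : Fin n) {v : V i.val} (h : v ≠ x i.val) :
    phi x i v = some ⟨i, ⟨v, h⟩⟩ := by unfold phi; exact dif_neg h

@[simp] lemma proj_none (x : ∀ i, V i) (i : Fin n) : proj x i none = x i.val := rfl

@[simp] lemma proj_some_self (x : ∀ i, V i) (i : Fin n)
    (w : {v : V i.val // v ≠ x i.val}) : proj x i (some ⟨i, w⟩) = w.1 := by
  simp [proj]

lemma proj_some_ne (x : ∀ i, V i) {i j : Fin n} (hji : j ≠ i)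
    (w : {v : V j.val // v ≠ x j.val}) : proj x i (some ⟨j, w⟩) = x i.val := by
  simp [proj, hji]

@[simp] lemma proj_phi (x : ∀ i, V i) (i : Fin n) (v : V i.val) :
    proj x i (phi x i v) = v := by
  by_cases h : v = x i.val
  · rw [h, phi_x]; rfl
  · rw [phi_ne x i h, proj_some_self]

lemma phi_injective (x : ∀ i, V i) (i : Fin n) : Function.Injective (phi x i) :=
  Function.LeftInverse.injective (proj_phi x i)

variable {G : ∀ i, SimpleGraph (V i)} {x : ∀ i, V i}

lemma adj_phi (i : Fin n) (u v : V i.val) :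
    (bouquetGraph n V G x).Adj (phi x i u) (phi x i v) ↔ (G i.val).Adj u v := by
  constructor
  · rintro (⟨j, a, b, h, hp, hq⟩ | ⟨j, b, h, (⟨hp, hq⟩ | ⟨hp, hq⟩)⟩)
    · by_cases hu : u = x i.val
      · rw [hu, phi_x] at hp; exact nomatch hp
      · by_cases hv : v = x i.val
        · rw [hv, phi_x] at hq; exact nomatch hq
        · rw [phi_ne x i hu] at hp; rw [phi_ne x i hv] at hq
          obtain ⟨rfl, ha⟩ := Sigma.mk.inj_iff.mp (Option.some_injective _ hp)
          obtain ⟨-, hb⟩ := Sigma.mk.inj_iff.mp (Option.some_injective _ hq)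
          obtain rfl : (⟨u, hu⟩ : {v : V i.val // v ≠ x i.val}) = a := eq_of_heq ha
          obtain rfl : (⟨v, hv⟩ : {v : V i.val // v ≠ x i.val}) = b := eq_of_heq hb
          exact h
    · -- phi u = none, phi v = some ⟨j, b⟩
      by_cases hu : u = x i.val
      · by_cases hv : v = x i.val
        · rw [hv, phi_x] at hq; exact nomatch hq
        · rw [phi_ne x i hv] at hq
          obtain ⟨rfl, hb⟩ := Sigma.mk.inj_iff.mp (Option.some_injective _ hq)
          obtain rfl : (⟨v, hv⟩ : {v : V i.val // v ≠ x i.val}) = b := eq_of_heq hb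
          rw [hu]; exact h
      · rw [phi_ne x i hu] at hp; exact nomatch hp
    · by_cases hv : v = x i.val
      · by_cases hu : u = x i.val
        · rw [hu, phi_x] at hp; exact nomatch hp
        · rw [phi_ne x i hu] at hp
          obtain ⟨rfl, hb⟩ := Sigma.mk.inj_iff.mp (Option.some_injective _ hp)
          obtain rfl : (⟨u, hu⟩ : {v : V i.val // v ≠ x i.val}) = b := eq_of_heq hb
          rw [hv]; exact h.symm
      · rw [phi_ne x i hv] at hq; exact nomatch hq
  · intro h
    by_cases hu : u = x i.val
    · have hv : v ≠ x i.val := by rintro rfl; rw [hu] at h; exact (G i.val).irrefl h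
      rw [hu, phi_x, phi_ne x i hv]
      exact Or.inr ⟨i, ⟨v, hv⟩, hu ▸ h, Or.inl ⟨rfl, rfl⟩⟩
    · by_cases hv : v = x i.val
      · rw [hv, phi_x, phi_ne x i hu]
        exact Or.inr ⟨i, ⟨u, hu⟩, hv ▸ h.symm, Or.inr ⟨rfl, rfl⟩⟩
      · rw [phi_ne x i hu, phi_ne x i hv]
        exact Or.inl ⟨i, ⟨u, hu⟩, ⟨v, hv⟩, h, rfl, rfl⟩

lemma adj_proj (i : Fin n) {p q : Option ((j : Fin n) × {v : V j.val // v ≠ x j.val})}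
    (h : (bouquetGraph n V G x).Adj p q) :
    (G i.val).Adj (proj x i p) (proj x i q) ∨ proj x i p = proj x i q := by
  rcases h with ⟨j, a, b, h, rfl, rfl⟩ | ⟨j, b, h, (⟨rfl, rfl⟩ | ⟨rfl, rfl⟩)⟩
  · by_cases hji : j = i
    · subst hji; rw [proj_some_self, proj_some_self]; exact Or.inl h
    · rw [proj_some_ne x hji, proj_some_ne x hji]; exact Or.inr rfl
  · by_cases hji : j = i
    · subst hji; rw [proj_none, proj_some_self]; exact Or.inl h
    · rw [proj_none, proj_some_ne x hji]; exact Or.inr rfl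
  · by_cases hji : j = i
    · subst hji; rw [proj_none, proj_some_self]; exact Or.inl h.symm
    · rw [proj_none, proj_some_ne x hji]; exact Or.inr rfl
open SimpleGraph in
lemma exists_walk_proj (i : Fin n) {p q : Option ((j : Fin n) × {v : V j.val // v ≠ x j.val})}
    (W : (bouquetGraph n V G x).Walk p q) :
    ∃ W' : (G i.val).Walk (proj x i p) (proj x i q), W'.length ≤ W.length := by
  induction W with
  | nil => exact ⟨SimpleGraph.Walk.nil, le_rfl⟩
  | cons h W ih =>
    obtain ⟨W', hW'⟩ := ih
    rcases adj_proj i h with hadj | heq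
    · exact ⟨SimpleGraph.Walk.cons hadj W', by
        rw [SimpleGraph.Walk.length_cons, SimpleGraph.Walk.length_cons]; omega⟩
    · exact ⟨W'.copy heq.symm rfl, by
        rw [SimpleGraph.Walk.length_copy, SimpleGraph.Walk.length_cons]; omega⟩

noncomputable def phiHom (i : Fin n) : G i.val →g bouquetGraph n V G x :=
  ⟨phi x i, fun h => (adj_phi i _ _).mpr h⟩

@[simp] lemma phiHom_apply (i : Fin n) (v : V i.val) : phiHom (G := G) (x := x) i v = phi x i v := rfl

lemma phi_val (i : Fin n) (a : {v : V i.val // v ≠ x i.val}) :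
    phi x i a.1 = some ⟨i, a⟩ := by rw [phi_ne x i a.2]

lemma dist_phi (i : Fin n) (hc : (G i.val).Connected) (u v : V i.val) :
    (bouquetGraph n V G x).dist (phi x i u) (phi x i v) = (G i.val).dist u v := by
  apply le_antisymm
  · obtain ⟨W, hW⟩ := hc.exists_walk_length_eq_dist u v
    calc (bouquetGraph n V G x).dist (phi x i u) (phi x i v)
        ≤ (W.map (phiHom i)).length := SimpleGraph.dist_le _
      _ = W.length := SimpleGraph.Walk.length_map _ _
      _ = (G i.val).dist u v := hW
  · obtain ⟨W0, _⟩ := hc.exists_walk_length_eq_dist u v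
    have hr : (bouquetGraph n V G x).Reachable (phi x i u) (phi x i v) := ⟨W0.map (phiHom i)⟩
    obtain ⟨W, hW⟩ := hr.exists_walk_length_eq_dist
    obtain ⟨W', hW'⟩ := exists_walk_proj i W
    have := SimpleGraph.dist_le W'
    simp only [proj_phi] at this
    omega

lemma none_mem_support {i j : Fin n} (hij : i ≠ j) :
    ∀ {p q : Option ((k : Fin n) × {v : V k.val // v ≠ x k.val})}
      (W : (bouquetGraph n V G x).Walk p q),
      (∃ a, p = some ⟨i, a⟩) → (∃ b, q = some ⟨j, b⟩) → none ∈ W.support := by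
  intro p q W
  induction W with
  | nil =>
    rintro ⟨a, rfl⟩ ⟨b, hb⟩
    exact absurd (Sigma.mk.inj_iff.mp (Option.some_injective _ hb)).1 hij
  | @cons p r q h W ih =>
    rintro ⟨a, rfl⟩ hq
    rcases h with ⟨k, c, d, hcd, hpk, hrk⟩ | ⟨k, c, hc, (⟨hp0, -⟩ | ⟨-, hr0⟩)⟩
    · obtain ⟨hk, -⟩ := Sigma.mk.inj_iff.mp (Option.some_injective _ hpk)
      subst hk
      subst hrk
      show none ∈ _ :: W.support
      exact List.mem_cons_of_mem _ (ih ⟨d, rfl⟩ hq)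
    · exact nomatch hp0
    · subst hr0
      show none ∈ _ :: W.support
      exact List.mem_cons_of_mem _ W.start_mem_support

lemma dist_none (i : Fin n) (hc : (G i.val).Connected) (u : V i.val) :
    (bouquetGraph n V G x).dist (phi x i u) none = (G i.val).dist u (x i.val) := by
  have := dist_phi (G := G) (x := x) i hc u (x i.val)
  rwa [phi_x] at this

lemma dist_cross {i j : Fin n} (hij : i ≠ j) (hci : (G i.val).Connected)
    (hcj : (G j.val).Connected) (a : {v : V i.val // v ≠ x i.val})
    (b : {v : V j.val // v ≠ x j.val}) :
    (bouquetGraph n V G x).dist (some ⟨i, a⟩) (some ⟨j, b⟩) =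
      (G i.val).dist a.1 (x i.val) + (G j.val).dist (x j.val) b.1 := by
  classical
  obtain ⟨P1, hP1⟩ := hci.exists_walk_length_eq_dist a.1 (x i.val)
  obtain ⟨P2, hP2⟩ := hcj.exists_walk_length_eq_dist (x j.val) b.1
  set W1 : (bouquetGraph n V G x).Walk (some ⟨i, a⟩) none :=
    (P1.map (phiHom i)).copy (phi_val i a) (phi_x x i) with hW1def
  have hW1 : W1.length = (G i.val).dist a.1 (x i.val) := by
    rw [hW1def]
    exact (SimpleGraph.Walk.length_copy _ _ _).trans ((SimpleGraph.Walk.length_map _ _).trans hP1)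
  set W2 : (bouquetGraph n V G x).Walk none (some ⟨j, b⟩) :=
    (P2.map (phiHom j)).copy (phi_x x j) (phi_val j b) with hW2def
  have hW2 : W2.length = (G j.val).dist (x j.val) b.1 := by
    rw [hW2def]
    exact (SimpleGraph.Walk.length_copy _ _ _).trans ((SimpleGraph.Walk.length_map _ _).trans hP2)
  apply le_antisymm
  · have := SimpleGraph.dist_le (W1.append W2)
    rwa [SimpleGraph.Walk.length_append, hW1, hW2] at this
  · have hr : (bouquetGraph n V G x).Reachable (some ⟨i, a⟩) (some ⟨j, b⟩) := ⟨W1.append W2⟩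
    obtain ⟨W, hW⟩ := hr.exists_walk_length_eq_dist
    have hnone : none ∈ W.support := none_mem_support hij W ⟨a, rfl⟩ ⟨b, rfl⟩
    have hsplit : (W.takeUntil none hnone).length + (W.dropUntil none hnone).length
        = W.length := by
      have := congrArg SimpleGraph.Walk.length (W.take_spec hnone)
      rwa [SimpleGraph.Walk.length_append] at this
    have h1 : (bouquetGraph n V G x).dist (some ⟨i, a⟩) none ≤
        (W.takeUntil none hnone).length := SimpleGraph.dist_le _
    have h2 : (bouquetGraph n V G x).dist none (some ⟨j, b⟩) ≤
        (W.dropUntil none hnone).length := SimpleGraph.dist_le _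
    have e1 : (bouquetGraph n V G x).dist (some ⟨i, a⟩) none
        = (G i.val).dist a.1 (x i.val) := by
      have := dist_none (G := G) (x := x) i hci a.1
      rwa [phi_val] at this
    have e2 : (bouquetGraph n V G x).dist none (some ⟨j, b⟩)
        = (G j.val).dist (x j.val) b.1 := by
      have := dist_phi (G := G) (x := x) j hcj (x j.val) b.1
      rwa [phi_x, phi_val] at this
    omega

variable [∀ k, Finite (V k)]

lemma dist_some_phi {k i : Fin n} (hki : k ≠ i) (hc : ∀ l : Fin n, (G l.val).Connected)
    (w : {v : V k.val // v ≠ x k.val}) (u : V i.val) :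
    (bouquetGraph n V G x).dist (some ⟨k, w⟩) (phi x i u) =
      (G k.val).dist w.1 (x k.val) + (G i.val).dist (x i.val) u := by
  by_cases hu : u = x i.val
  · subst hu
    rw [phi_x, SimpleGraph.dist_self]
    have := dist_none (G := G) (x := x) k (hc k) w.1
    rw [phi_val] at this
    omega
  · rw [phi_ne x i hu]
    exact dist_cross hki (hc k) (hc i) w ⟨u, hu⟩

open Classical in
noncomputable def sumEquiv (x : ∀ i, V i) (i : Fin n) :
    (V i.val ⊕ {p : (k : Fin n) × {v : V k.val // v ≠ x k.val} // p.1 ≠ i}) ≃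
      Option ((k : Fin n) × {v : V k.val // v ≠ x k.val}) :=
  Equiv.ofBijective (fun y => Sum.elim (phi x i) (fun p => some p.1) y) (by
    constructor
    · rintro (a | p) (b | q) hab
      · exact congrArg Sum.inl (phi_injective x i hab)
      · exfalso
        simp only [Sum.elim_inl, Sum.elim_inr] at hab
        by_cases ha : a = x i.val
        · rw [ha, phi_x] at hab; exact nomatch hab
        · rw [phi_ne x i ha] at hab
          exact q.2 (Sigma.mk.inj_iff.mp (Option.some_injective _ hab)).1.symm
      · exfalso
        simp only [Sum.elim_inl, Sum.elim_inr] at hab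
        by_cases hb : b = x i.val
        · rw [hb, phi_x] at hab; exact nomatch hab.symm
        · rw [phi_ne x i hb] at hab
          exact p.2 (Sigma.mk.inj_iff.mp (Option.some_injective _ hab.symm)).1.symm
      · simp only [Sum.elim_inr] at hab
        exact congrArg Sum.inr (Subtype.ext (Option.some_injective _ hab))
    · rintro (_ | ⟨k, w⟩)
      · exact ⟨Sum.inl (x i.val), phi_x x i⟩
      · by_cases hki : k = i
        · subst hki
          exact ⟨Sum.inl w.1, phi_val _ w⟩
        · exact ⟨Sum.inr ⟨⟨k, w⟩, hki⟩, rfl⟩)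

lemma card_option_eq (x : ∀ i, V i) (i : Fin n) :
    Nat.card (Option ((k : Fin n) × {v : V k.val // v ≠ x k.val})) =
      Nat.card (V i.val) +
        Nat.card {p : (k : Fin n) × {v : V k.val // v ≠ x k.val} // p.1 ≠ i} := by
  rw [← Nat.card_congr (sumEquiv x i), Nat.card_sum]

lemma closer_phi (hc : ∀ l : Fin n, (G l.val).Connected) (i : Fin n) (u v : V i.val) :
    closerCount (bouquetGraph n V G x) (phi x i u) (phi x i v) =
      closerCount (G i.val) u v +
        (if (G i.val).dist (x i.val) u < (G i.val).dist (x i.val) v then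
          Nat.card {p : (k : Fin n) × {v : V k.val // v ≠ x k.val} // p.1 ≠ i} else 0) := by
  classical
  set B := bouquetGraph n V G x with hB
  set P : Option ((k : Fin n) × {v : V k.val // v ≠ x k.val}) → Prop :=
    fun w => B.dist w (phi x i u) < B.dist w (phi x i v) with hP
  have h1 : closerCount B (phi x i u) (phi x i v) = Nat.card {w // P w} := rfl
  rw [h1, ← Nat.card_congr ((sumEquiv (n := n) x i).subtypeEquiv (fun y => Iff.rfl)
    : {y // P (sumEquiv x i y)} ≃ {w // P w}),
    Nat.card_congr (Equiv.subtypeSum (p := fun y => P (sumEquiv x i y))), Nat.card_sum]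
  congr 1
  · apply Nat.card_congr
    apply Equiv.subtypeEquivRight
    intro a
    show B.dist (phi x i a) (phi x i u) < B.dist (phi x i a) (phi x i v) ↔ _
    simp only [hB, dist_phi i (hc i)]
  · have key : ∀ p : {p : (k : Fin n) × {v : V k.val // v ≠ x k.val} // p.1 ≠ i},
        P (sumEquiv x i (Sum.inr p)) ↔
          (G i.val).dist (x i.val) u < (G i.val).dist (x i.val) v := by
      rintro ⟨⟨k, w⟩, hki⟩
      show B.dist (some ⟨k, w⟩) (phi x i u) < B.dist (some ⟨k, w⟩) (phi x i v) ↔ _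
      rw [dist_some_phi hki hc, dist_some_phi hki hc]
      omega
    by_cases hd : (G i.val).dist (x i.val) u < (G i.val).dist (x i.val) v
    · rw [if_pos hd]
      exact Nat.card_congr (Equiv.subtypeUnivEquiv (fun p => (key p).mpr hd))
    · rw [if_neg hd]
      have : IsEmpty {p : {p : (k : Fin n) × {v : V k.val // v ≠ x k.val} // p.1 ≠ i} //
          P (sumEquiv x i (Sum.inr p))} :=
        ⟨fun p => hd ((key p.1).mp p.2)⟩
      exact Nat.card_of_isEmpty

lemma term_bound (hc : ∀ l : Fin n, (G l.val).Connected) (i : Fin n) (u v : V i.val) :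
    mostarTerm (bouquetGraph n V G x) s(phi x i u, phi x i v) ≤
      mostarTerm (G i.val) s(u, v) +
        Nat.card {p : (k : Fin n) × {v : V k.val // v ≠ x k.val} // p.1 ≠ i} := by
  simp only [mostarTerm, Sym2.lift_mk]
  rw [closer_phi hc i u v, closer_phi hc i v u]
  split_ifs with h1 h2 h2 <;> omega

lemma phi_eq_phi_ne {i j : Fin n} (hij : i ≠ j) {a : V i.val} {c : V j.val}
    (h : phi x i a = phi x j c) : a = x i.val := by
  by_cases ha : a = x i.val
  · exact ha
  · exfalso
    rw [phi_ne x i ha] at h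
    by_cases hc : c = x j.val
    · rw [hc, phi_x] at h; exact nomatch h
    · rw [phi_ne x j hc] at h
      exact hij (Sigma.mk.inj_iff.mp (Option.some_injective _ h)).1

omit [∀ k, Finite (V k)] in
lemma mostar_eq {α : Type*} (H : SimpleGraph α) [Fintype α] [DecidableEq α]
    [DecidableRel H.Adj] [Fintype H.edgeSet] :
    mostar H = ∑ e ∈ H.edgeFinset, mostarTerm H e := by
  unfold mostar
  apply Finset.sum_congr _ (fun _ _ => rfl)
  ext e
  simp [SimpleGraph.mem_edgeFinset]

end BouquetAux

open BouquetAux in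
theorem mostar_bouquetGraph_le (n : ℕ) (hn : 1 ≤ n) (V : ℕ → Type*) [∀ i, Finite (V i)]
    (G : ∀ i, SimpleGraph (V i)) (hconn : ∀ i < n, (G i).Connected) (x : ∀ i, V i) :
    mostar (bouquetGraph n V G x) ≤
      (∑ i ∈ range n, mostar (G i)) +
      ∑ i ∈ range n, Nat.card (G i).edgeSet *
        (Nat.card (Option ((i : Fin n) × {v : V i.val // v ≠ x i.val})) - Nat.card (V i)) := by
  classical
  have hc : ∀ l : Fin n, (G l.val).Connected := fun l => hconn l.val l.isLt
  letI : ∀ i : ℕ, Fintype (V i) := fun i => Fintype.ofFinite _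
  letI : Fintype (Option ((i : Fin n) × {v : V i.val // v ≠ x i.val})) := Fintype.ofFinite _
  set B := bouquetGraph n V G x with hB
  set M : Fin n → ℕ :=
    fun i => Nat.card {p : (k : Fin n) × {v : V k.val // v ≠ x k.val} // p.1 ≠ i} with hM
  have hedge : B.edgeFinset = Finset.univ.biUnion
      (fun i : Fin n => ((G i.val).edgeFinset).image (Sym2.map (phi x i))) := by
    ext e
    simp only [SimpleGraph.mem_edgeFinset, Finset.mem_biUnion, Finset.mem_univ, true_and,
      Finset.mem_image]
    constructor
    · induction e using Sym2.ind with
      | _ p q =>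
        intro h
        rcases h with ⟨i, a, b, hab, rfl, rfl⟩ | ⟨i, b, hb, (⟨rfl, rfl⟩ | ⟨rfl, rfl⟩)⟩
        · exact ⟨i, s(a.1, b.1), (SimpleGraph.mem_edgeSet _).mpr hab,
            by rw [Sym2.map_pair_eq, phi_val, phi_val]⟩
        · exact ⟨i, s(x i.val, b.1), (SimpleGraph.mem_edgeSet _).mpr hb,
            by rw [Sym2.map_pair_eq, phi_x, phi_val]⟩
        · exact ⟨i, s(b.1, x i.val),
            (SimpleGraph.mem_edgeSet _).mpr hb.symm,
            by rw [Sym2.map_pair_eq, phi_x, phi_val]⟩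
    · rintro ⟨i, a, ha, rfl⟩
      induction a using Sym2.ind with
      | _ u v =>
        rw [Sym2.map_pair_eq]
        exact (SimpleGraph.mem_edgeSet _).mpr
          ((adj_phi i u v).mpr ((SimpleGraph.mem_edgeSet _).mp ha))
  have hdisj : Set.PairwiseDisjoint (↑(Finset.univ : Finset (Fin n)))
      (fun i : Fin n => ((G i.val).edgeFinset).image (Sym2.map (phi x i))) := by
    intro i _ j _ hij
    simp only [Function.onFun]
    rw [Finset.disjoint_left]
    rintro e he1 he2
    obtain ⟨a, ha, rfl⟩ := Finset.mem_image.mp he1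
    obtain ⟨b, hb, hba⟩ := Finset.mem_image.mp he2
    induction a using Sym2.ind with
    | _ u v =>
      induction b using Sym2.ind with
      | _ u' v' =>
        rw [Sym2.map_pair_eq, Sym2.map_pair_eq, Sym2.eq_iff] at hba
        have hadj : (G i.val).Adj u v :=
          (SimpleGraph.mem_edgeSet _).mp (SimpleGraph.mem_edgeFinset.mp ha)
        rcases hba with ⟨h1, h2⟩ | ⟨h1, h2⟩
        · exact hadj.ne ((phi_eq_phi_ne hij h1.symm).trans (phi_eq_phi_ne hij h2.symm).symm)
        · exact hadj.ne ((phi_eq_phi_ne hij h2.symm).trans (phi_eq_phi_ne hij h1.symm).symm)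
  have hinj : ∀ i : Fin n, Set.InjOn (Sym2.map (phi x i)) ↑((G i.val).edgeFinset) :=
    fun i => fun a _ b _ hab => Sym2.map.injective (phi_injective x i) hab
  calc mostar B = ∑ e ∈ B.edgeFinset, mostarTerm B e := mostar_eq B
    _ = ∑ i : Fin n, ∑ e ∈ ((G i.val).edgeFinset).image (Sym2.map (phi x i)),
          mostarTerm B e := by rw [hedge, Finset.sum_biUnion hdisj]
    _ = ∑ i : Fin n, ∑ a ∈ (G i.val).edgeFinset, mostarTerm B (Sym2.map (phi x i) a) := by
          exact Finset.sum_congr rfl fun i _ => Finset.sum_image (hinj i)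
    _ ≤ ∑ i : Fin n, ∑ a ∈ (G i.val).edgeFinset, (mostarTerm (G i.val) a + M i) := by
          refine Finset.sum_le_sum fun i _ => Finset.sum_le_sum fun a _ => ?_
          induction a using Sym2.ind with
          | _ u v => rw [Sym2.map_pair_eq]; exact term_bound hc i u v
    _ = ∑ i : Fin n, (mostar (G i.val) + Nat.card (G i.val).edgeSet * M i) := by
          refine Finset.sum_congr rfl fun i _ => ?_
          rw [Finset.sum_add_distrib, Finset.sum_const, smul_eq_mul, mostar_eq,
            Nat.card_eq_fintype_card, SimpleGraph.edgeFinset_card]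
    _ = ∑ i : Fin n, (mostar (G i.val) + Nat.card (G i.val).edgeSet *
          (Nat.card (Option ((k : Fin n) × {v : V k.val // v ≠ x k.val})) -
            Nat.card (V i.val))) := by
          refine Finset.sum_congr rfl fun i _ => ?_
          have := card_option_eq (V := V) x i
          have hMi : Nat.card (Option ((k : Fin n) × {v : V k.val // v ≠ x k.val})) -
              Nat.card (V i.val) = M i := by rw [this, Nat.add_sub_cancel_left]
          rw [hMi]
    _ = (∑ i ∈ Finset.range n, mostar (G i)) +
          ∑ i ∈ Finset.range n, Nat.card (G i).edgeSet *
            (Nat.card (Option ((i : Fin n) × {v : V i.val // v ≠ x i.val})) - Nat.card (V i)) := by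
          rw [Finset.sum_add_distrib, ← Fin.sum_univ_eq_sum_range, ← Fin.sum_univ_eq_sum_range]
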